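/- Let b : ℝ → ℝ be bounded and Lipschitz and m : ℝ → ℝ be bounded and Lipschitz with m ≥ 0, and for ξ ∈ ℝⁿ set ⟨ξ⟩_{m(r)} = √(|ξ|² + m(r)²). Define the oscillatory integrals n^±(t,ξ) = ∫₀ᵗ exp(∓ i ∫ₛᵗ ⟨ξ⟩_{m(r)} dr) b(s) ds. Then there exists a constant C > 0, depending only on sup|b|, the Lipschitz constant of b, sup m and the Lipschitz constant of m, such that |n^±(t,ξ)| ≤ C(1+t)/|ξ| for all t ≥ 0 and all ξ ≠ 0. In particular n^±(t,ξ) → 0 as |ξ| → ∞, uniformly on bounded t-intervals. -/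

import Mathlib

noncomputable section
open MeasureTheory Matrix Complex

section Aux

open Finset

private lemma sqrt_add_sq_lip' {k x y : ℝ} (hx : 0 ≤ x) (hy : 0 ≤ y) (hk : 0 ≤ k) :
    |Real.sqrt (k + x^2) - Real.sqrt (k + y^2)| ≤ |x - y| := by
  have key : ∀ p q : ℝ, 0 ≤ p → 0 ≤ q → q ≤ p →
      Real.sqrt (k + p^2) - Real.sqrt (k + q^2) ≤ p - q := by
    intro p q hp hq hqp
    have h1 : 0 ≤ k + q^2 := by positivity
    have h2 : q ≤ Real.sqrt (k + q^2) := by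
      nlinarith [Real.sq_sqrt h1, Real.sqrt_nonneg (k + q^2)]
    have h3 : Real.sqrt (k + p^2) ≤ Real.sqrt (k + q^2) + (p - q) := by
      have h4 : k + p^2 ≤ (Real.sqrt (k + q^2) + (p - q))^2 := by
        nlinarith [Real.sq_sqrt h1]
      calc Real.sqrt (k + p^2) ≤ Real.sqrt ((Real.sqrt (k + q^2) + (p - q))^2) :=
            Real.sqrt_le_sqrt h4
        _ = Real.sqrt (k + q^2) + (p - q) := by
            rw [Real.sqrt_sq (by nlinarith [Real.sqrt_nonneg (k + q^2)])]
    linarith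
  rcases le_total y x with hxy | hxy
  · have := key x y hx hy hxy
    have hmono : Real.sqrt (k + y^2) ≤ Real.sqrt (k + x^2) :=
      Real.sqrt_le_sqrt (by nlinarith)
    rw [_root_.abs_of_nonneg (by linarith : (0:ℝ) ≤ √(k + x^2) - √(k + y^2)), _root_.abs_of_nonneg (by linarith : (0:ℝ) ≤ x - y)]
    exact this
  · have := key y x hy hx hxy
    have hmono : Real.sqrt (k + x^2) ≤ Real.sqrt (k + y^2) :=
      Real.sqrt_le_sqrt (by nlinarith)
    rw [abs_of_nonpos (by linarith), abs_of_nonpos (by linarith)]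
    linarith

private lemma ibp_bound' (F F' g : ℝ → ℂ) {a c : ℝ} (hac : a ≤ c)
    (hF : ∀ u, HasDerivAt F (F' u) u)
    (hF'c : Continuous F') (hgc : Continuous g)
    {Mf Mg L : ℝ} (hMg0 : 0 ≤ Mg) (hL0 : 0 ≤ L) (hMf0 : 0 ≤ Mf)
    (hMf : ∀ u ∈ Set.Icc a c, ‖F' u‖ ≤ Mf)
    (hFb : ∀ u ∈ Set.Icc a c, ‖F u‖ ≤ 1)
    (hMg : ∀ u ∈ Set.Icc a c, ‖g u‖ ≤ Mg)
    (hL : ∀ u ∈ Set.Icc a c, ∀ v ∈ Set.Icc a c, ‖g u - g v‖ ≤ L * |u - v|) :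
    ‖∫ u in a..c, F' u * g u‖ ≤ 2 * Mg + 2 * L * (c - a) := by
  rcases eq_or_lt_of_le hac with heq | hlt
  · subst heq; simp [intervalIntegral.integral_same]; positivity
  have hca : 0 < c - a := by linarith
  refine le_of_forall_pos_le_add ?_
  intro ε hε
  obtain ⟨N₀, hN₀⟩ := exists_nat_gt (Mf * L * (c - a)^2 / ε)
  set N : ℕ := N₀ + 1 with hNdef
  have hN1 : 1 ≤ N := Nat.le_add_left 1 N₀
  have hNpos : (0:ℝ) < N := by positivity
  have hNbig : Mf * L * (c - a) ^ 2 / ε < N := lt_of_lt_of_le hN₀ (by exact_mod_cast Nat.le_succ N₀)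
  set δ : ℝ := (c - a) / N with hδdef
  have hδpos : 0 < δ := by positivity
  set u : ℕ → ℝ := fun k => a + k * δ with hudef
  have hu0 : u 0 = a := by show a + (0:ℕ) * δ = a; push_cast; ring
  have huN : u N = c := by
    show a + (N:ℝ) * δ = c
    rw [hδdef]; field_simp; ring
  have hustep : ∀ k : ℕ, u (k+1) - u k = δ := by
    intro k; show (a + (↑(k+1):ℝ) * δ) - (a + ↑k * δ) = δ; push_cast; ring
  have humono : ∀ k, u k ≤ u (k+1) := fun k => by linarith [hustep k, hδpos]
  have hua : ∀ k : ℕ, a ≤ u k := by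
    intro k
    show a ≤ a + (k:ℝ) * δ
    have : 0 ≤ (k:ℝ) * δ := by positivity
    linarith
  have huc : ∀ k : ℕ, k ≤ N → u k ≤ c := by
    intro k hk
    have hkN : (k:ℝ) ≤ (N:ℝ) := by exact_mod_cast hk
    rw [← huN]
    show a + (k:ℝ) * δ ≤ a + (N:ℝ) * δ
    nlinarith [hδpos.le]
  have hukIcc : ∀ k : ℕ, k ≤ N → u k ∈ Set.Icc a c := fun k hk => ⟨hua k, huc k hk⟩
  have husub : ∀ k : ℕ, k + 1 ≤ N → Set.uIcc (u k) (u (k+1)) ⊆ Set.Icc a c := by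
    intro k hk
    rw [Set.uIcc_of_le (humono k)]
    exact Set.Icc_subset_Icc (hua k) (huc (k+1) hk)
  have hcont : Continuous (fun x => F' x * g x) := hF'c.mul hgc
  have hsplit : ∑ k ∈ range N, (∫ x in (u k)..(u (k+1)), F' x * g x) = ∫ x in a..c, F' x * g x := by
    rw [← hu0, ← huN]
    exact intervalIntegral.sum_integral_adjacent_intervals
      (fun k _ => (hcont.intervalIntegrable _ _))
  have hpiece : ∀ k : ℕ, k + 1 ≤ N →
      ‖(∫ x in (u k)..(u (k+1)), F' x * g x) - g (u k) * (F (u (k+1)) - F (u k))‖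
        ≤ Mf * L * δ^2 := by
    intro k hk
    have hmem := husub k hk
    have hftc := intervalIntegral.integral_eq_sub_of_hasDerivAt
      (f := fun x => F x * g (u k)) (f' := fun x => F' x * g (u k))
      (a := u k) (b := u (k+1))
      (fun x _ => (hF x).mul_const (g (u k)))
      ((hF'c.mul continuous_const).intervalIntegrable _ _)
    have hdiff : (∫ x in (u k)..(u (k+1)), F' x * g x) - g (u k) * (F (u (k+1)) - F (u k))
        = ∫ x in (u k)..(u (k+1)), F' x * (g x - g (u k)) := by
      have hs2 : (∫ x in (u k)..(u (k+1)), F' x * g x)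
          = (∫ x in (u k)..(u (k+1)), F' x * g (u k))
            + ∫ x in (u k)..(u (k+1)), F' x * (g x - g (u k)) := by
        rw [← intervalIntegral.integral_add (f := fun x => F' x * g (u k)) (g := fun x => F' x * (g x - g (u k)))
          ((hF'c.mul continuous_const).intervalIntegrable _ _)
          ((hF'c.mul (hgc.sub continuous_const)).intervalIntegrable _ _)]
        exact intervalIntegral.integral_congr (fun x _ => by ring)
      rw [hs2, hftc]; ring
    rw [hdiff]
    have hbd : ∀ x ∈ Set.uIoc (u k) (u (k+1)), ‖F' x * (g x - g (u k))‖ ≤ Mf * (L * δ) := by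
      intro x hx
      have hx' : x ∈ Set.uIcc (u k) (u (k+1)) := Set.uIoc_subset_uIcc hx
      have hxIcc : x ∈ Set.Icc a c := hmem hx'
      have hukm : u k ∈ Set.Icc a c := hukIcc k (le_trans (Nat.le_succ k) hk)
      have hxd : |x - u k| ≤ δ := by
        rw [Set.uIcc_of_le (humono k)] at hx'
        rw [abs_le]
        constructor
        · linarith [hx'.1]
        · linarith [hx'.2, hustep k]
      rw [norm_mul]
      calc ‖F' x‖ * ‖g x - g (u k)‖ ≤ Mf * (L * |x - u k|) :=
            mul_le_mul (hMf x hxIcc) (hL x hxIcc (u k) hukm) (norm_nonneg _) hMf0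
        _ ≤ Mf * (L * δ) :=
            mul_le_mul_of_nonneg_left (mul_le_mul_of_nonneg_left hxd hL0) hMf0
    calc ‖∫ x in (u k)..(u (k+1)), F' x * (g x - g (u k))‖
        ≤ Mf * (L * δ) * |u (k+1) - u k| :=
          intervalIntegral.norm_integral_le_of_norm_le_const hbd
      _ = Mf * L * δ^2 := by rw [hustep k, abs_of_pos hδpos]; ring
  have habel : ‖∑ k ∈ range N, g (u k) * (F (u (k+1)) - F (u k))‖
      ≤ 2 * Mg + 2 * L * (c - a) := by
    have hsum := Finset.sum_range_by_parts (fun k => g (u k))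
      (fun k => F (u (k+1)) - F (u k)) N
    simp only [smul_eq_mul] at hsum
    have htel : ∀ M : ℕ, ∑ i ∈ range M, (F (u (i+1)) - F (u i)) = F (u M) - F (u 0) :=
      fun M => Finset.sum_range_sub (fun i => F (u i)) M
    rw [hsum]
    have hterm1 : ‖g (u (N-1)) * (∑ i ∈ range N, (F (u (i+1)) - F (u i)))‖ ≤ Mg * 2 := by
      rw [htel N, norm_mul]
      have h1 : ‖g (u (N-1))‖ ≤ Mg := hMg _ (hukIcc _ (Nat.sub_le N 1))
      have h2 : ‖F (u N) - F (u 0)‖ ≤ 2 := by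
        calc ‖F (u N) - F (u 0)‖ ≤ ‖F (u N)‖ + ‖F (u 0)‖ := norm_sub_le _ _
          _ ≤ 1 + 1 := add_le_add (hFb _ (hukIcc _ le_rfl)) (hFb _ (hukIcc _ (Nat.zero_le N)))
          _ = 2 := by norm_num
      exact mul_le_mul h1 h2 (norm_nonneg _) hMg0
    have hterm2 : ‖∑ i ∈ range (N-1), (g (u (i+1)) - g (u i)) *
        (∑ j ∈ range (i+1), (F (u (j+1)) - F (u j)))‖ ≤ L * δ * 2 * (N - 1) := by
      calc ‖∑ i ∈ range (N-1), (g (u (i+1)) - g (u i)) *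
            (∑ j ∈ range (i+1), (F (u (j+1)) - F (u j)))‖
          ≤ ∑ i ∈ range (N-1), ‖(g (u (i+1)) - g (u i)) *
            (∑ j ∈ range (i+1), (F (u (j+1)) - F (u j)))‖ := norm_sum_le _ _
        _ ≤ ∑ _i ∈ range (N-1), L * δ * 2 := by
            apply Finset.sum_le_sum
            intro i hi
            rw [htel (i+1), norm_mul]
            have hiN : i + 1 ≤ N := by
              have := Finset.mem_range.1 hi
              omega
            have h1 : ‖g (u (i+1)) - g (u i)‖ ≤ L * δ := by
              have h := hL (u (i+1)) (hukIcc _ hiN) (u i) (hukIcc _ (le_trans (Nat.le_succ i) hiN))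
              rw [hustep i, abs_of_pos hδpos] at h
              exact h
            have h2 : ‖F (u (i+1)) - F (u 0)‖ ≤ 2 := by
              calc ‖F (u (i+1)) - F (u 0)‖ ≤ ‖F (u (i+1))‖ + ‖F (u 0)‖ := norm_sub_le _ _
                _ ≤ 1 + 1 := add_le_add (hFb _ (hukIcc _ hiN)) (hFb _ (hukIcc _ (Nat.zero_le N)))
                _ = 2 := by norm_num
            exact mul_le_mul h1 h2 (norm_nonneg _) (by positivity)
        _ = L * δ * 2 * (N - 1) := by
            rw [Finset.sum_const, Finset.card_range, nsmul_eq_mul]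
            have hc1 : ((N - 1 : ℕ) : ℝ) = (N : ℝ) - 1 := by
              rw [Nat.cast_sub hN1]; norm_num
            rw [hc1]; ring
    calc ‖g (u (N-1)) * (∑ i ∈ range N, (F (u (i+1)) - F (u i))) -
          ∑ i ∈ range (N-1), (g (u (i+1)) - g (u i)) *
            (∑ j ∈ range (i+1), (F (u (j+1)) - F (u j)))‖
        ≤ Mg * 2 + L * δ * 2 * (N - 1) :=
          le_trans (norm_sub_le _ _) (add_le_add hterm1 hterm2)
      _ ≤ 2 * Mg + 2 * L * (c - a) := by
          have hδN : δ * ((N:ℝ) - 1) ≤ c - a := by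
            have he : δ * (N:ℝ) = c - a := by rw [hδdef]; field_simp
            nlinarith
          nlinarith
  have hmain : ‖∫ x in a..c, F' x * g x‖
      ≤ 2 * Mg + 2 * L * (c - a) + N * (Mf * L * δ^2) := by
    rw [← hsplit]
    have hstep : ‖∑ k ∈ range N, (∫ x in (u k)..(u (k+1)), F' x * g x)‖
        ≤ ‖∑ k ∈ range N, g (u k) * (F (u (k+1)) - F (u k))‖
          + ∑ _k ∈ range N, Mf * L * δ^2 := by
      have hdec : ∑ k ∈ range N, (∫ x in (u k)..(u (k+1)), F' x * g x)
          = (∑ k ∈ range N, g (u k) * (F (u (k+1)) - F (u k)))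
            + ∑ k ∈ range N, ((∫ x in (u k)..(u (k+1)), F' x * g x)
              - g (u k) * (F (u (k+1)) - F (u k))) := by
        rw [← Finset.sum_add_distrib]
        congr 1; ext k; ring
      rw [hdec]
      refine le_trans (norm_add_le _ _) (add_le_add le_rfl ?_)
      refine le_trans (norm_sum_le _ _) (Finset.sum_le_sum ?_)
      intro k hk
      exact hpiece k (Finset.mem_range.1 hk)
    refine le_trans hstep ?_
    rw [Finset.sum_const, Finset.card_range, nsmul_eq_mul]
    linarith [habel]
  refine le_trans hmain ?_
  have hfin : (N:ℝ) * (Mf * L * δ^2) ≤ ε := by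
    have heq2 : (N:ℝ) * (Mf * L * δ^2) = Mf * L * (c-a)^2 / N := by
      rw [hδdef]; field_simp
    rw [heq2, div_le_iff₀ hNpos]
    have := (div_lt_iff₀ hε).1 hNbig
    linarith
  linarith

end Aux

/-- The oscillatory integral `∫₀ᵗ exp(σ i ∫ᵤᵗ ⟨ξ⟩_{m(r)} dr) b(u) du`, where
`⟨ξ⟩_{m(r)} = √(|ξ|² + m(r)²)`; `σ = -1` gives `n⁺` and `σ = 1` gives `n⁻`. -/
def oscInt {n : ℕ} (b m : ℝ → ℝ) (σ : ℝ) (t : ℝ) (ξ : EuclideanSpace ℝ (Fin n)) : ℂ :=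
  ∫ u in (0:ℝ)..t,
    Complex.exp ((σ : ℂ) * Complex.I *
      ((∫ r in u..t, Real.sqrt (‖ξ‖ ^ 2 + m r ^ 2) : ℝ) : ℂ)) * (b u : ℂ)

/-- The off-diagonal entries `n^±(t,ξ)` of the diagonalizer satisfy
`|n^±(t,ξ)| ≤ C(1+t)/|ξ|`; in particular `n^±(t,ξ) → 0` as `|ξ| → ∞`,
uniformly on bounded `t`-intervals. -/
theorem oscillatory_integral_bound
    {n : ℕ} (b m : ℝ → ℝ)
    (Cb : ℝ) (hb_bdd : ∀ t, |b t| ≤ Cb) (Lb : NNReal) (hb_lip : LipschitzWith Lb b)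
    (Cm : ℝ) (hm_bdd : ∀ t, m t ≤ Cm) (hm_nonneg : ∀ t, 0 ≤ m t)
    (Lm : NNReal) (hm_lip : LipschitzWith Lm m) :
    ∃ C > (0 : ℝ),
      (∀ t ≥ (0 : ℝ), ∀ ξ : EuclideanSpace ℝ (Fin n), ξ ≠ 0 →
        ‖oscInt b m (-1) t ξ‖ ≤ C * (1 + t) / ‖ξ‖ ∧
        ‖oscInt b m 1 t ξ‖ ≤ C * (1 + t) / ‖ξ‖) ∧
      (∀ ε > (0 : ℝ), ∀ t₁ ≥ (0 : ℝ), ∃ R > (0 : ℝ),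
        ∀ ξ : EuclideanSpace ℝ (Fin n), R ≤ ‖ξ‖ → ∀ t ∈ Set.Icc (0 : ℝ) t₁,
          ‖oscInt b m (-1) t ξ‖ ≤ ε ∧ ‖oscInt b m 1 t ξ‖ ≤ ε) := by
  have hCb0 : 0 ≤ Cb := le_trans (abs_nonneg _) (hb_bdd 0)
  have hCm0 : 0 ≤ Cm := le_trans (hm_nonneg 0) (hm_bdd 0)
  have hLb0 : (0:ℝ) ≤ (Lb:ℝ) := Lb.coe_nonneg
  have hLm0 : (0:ℝ) ≤ (Lm:ℝ) := Lm.coe_nonneg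
  have hcm : Continuous m := hm_lip.continuous
  have hcb : Continuous b := hb_lip.continuous
  set C : ℝ := 2*Cb + 2*((Lb:ℝ) + Cb*(Lm:ℝ)) + 1 with hCdef
  have hCpos : 0 < C := by positivity
  have key : ∀ σ : ℝ, σ = 1 ∨ σ = -1 → ∀ t : ℝ, 0 ≤ t →
      ∀ ξ : EuclideanSpace ℝ (Fin n), ξ ≠ 0 →
      ‖oscInt b m σ t ξ‖ ≤ C * (1 + t) / ‖ξ‖ := by
    intro σ hσ t ht ξ hξ
    set k : ℝ := ‖ξ‖ with hkdef
    have hk : 0 < k := norm_pos_iff.2 hξ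
    set h : ℝ → ℝ := fun r => Real.sqrt (k^2 + m r^2) with hhdef
    have hch : Continuous h := Real.continuous_sqrt.comp (continuous_const.add (hcm.pow 2))
    have hh_ge : ∀ r, k ≤ h r := by
      intro r
      have : Real.sqrt (k^2) ≤ Real.sqrt (k^2 + m r^2) :=
        Real.sqrt_le_sqrt (by nlinarith [hm_nonneg r])
      rwa [Real.sqrt_sq hk.le] at this
    have hh_pos : ∀ r, 0 < h r := fun r => lt_of_lt_of_le hk (hh_ge r)
    have hh_le : ∀ r, h r ≤ k + Cm := by
      intro r
      have h1 : Real.sqrt (k^2 + m r^2) ≤ Real.sqrt ((k + Cm)^2) :=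
        Real.sqrt_le_sqrt (by nlinarith [hm_nonneg r, hm_bdd r])
      rwa [Real.sqrt_sq (by positivity)] at h1
    set Φ : ℝ → ℝ := fun a => ∫ r in a..t, h r with hΦdef
    have hΦ : ∀ a, HasDerivAt Φ (-(h a)) a := fun a =>
      intervalIntegral.integral_hasDerivAt_left (hch.intervalIntegrable a t)
        (hch.stronglyMeasurableAtFilter _ _) hch.continuousAt
    set F : ℝ → ℂ := fun a => Complex.exp ((σ:ℂ) * Complex.I * (Φ a : ℂ)) with hFdef
    set F' : ℝ → ℂ := fun a => F a * ((σ:ℂ) * Complex.I * ((-(h a) : ℝ) : ℂ)) with hF'def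
    have hF : ∀ a, HasDerivAt F (F' a) a := by
      intro a
      have h1 : HasDerivAt (fun x : ℝ => ((Φ x : ℝ) : ℂ)) ((-(h a) : ℝ) : ℂ) a :=
        (hΦ a).ofReal_comp
      exact (h1.const_mul ((σ:ℂ) * Complex.I)).cexp
    have hΦc : Continuous Φ := continuous_iff_continuousAt.2 fun a => (hΦ a).continuousAt
    have hFc : Continuous F :=
      Complex.continuous_exp.comp (continuous_const.mul (Complex.continuous_ofReal.comp hΦc))
    have hF'c : Continuous F' := by
      apply hFc.mul
      exact continuous_const.mul (Complex.continuous_ofReal.comp (hch.neg))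
    set g : ℝ → ℂ := fun a => (σ:ℂ) * Complex.I * ((b a / h a : ℝ) : ℂ) with hgdef
    have hgc : Continuous g := by
      apply continuous_const.mul
      exact Complex.continuous_ofReal.comp (hcb.div hch (fun r => (hh_pos r).ne'))
    have hσsq : (σ:ℂ)^2 = 1 := by rcases hσ with rfl | rfl <;> norm_num
    have habsσ : ‖(σ:ℂ)‖ = 1 := by rcases hσ with rfl | rfl <;> norm_num
    have hid : ∀ x, F' x * g x = F x * (b x : ℂ) := by
      intro x
      have hhx : ((h x : ℝ) : ℂ) ≠ 0 := by exact_mod_cast (hh_pos x).ne'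
      rw [hF'def, hgdef]
      push_cast
      field_simp
      linear_combination (-(F x*(b x:ℂ))*Complex.I^2) * hσsq
        + (-(F x*(b x:ℂ))) * Complex.I_sq
    have hFb : ∀ u : ℝ, ‖F u‖ = 1 := by
      intro u
      rw [hFdef]
      simp [Complex.norm_exp]
    have hF'b : ∀ u : ℝ, ‖F' u‖ ≤ k + Cm := by
      intro u
      rw [hF'def, norm_mul, hFb, one_mul, norm_mul, norm_mul, habsσ, Complex.norm_I,
        Complex.norm_real]
      simp only [one_mul, Real.norm_eq_abs, abs_neg, abs_of_pos (hh_pos u)]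
      exact hh_le u
    have hgb : ∀ u : ℝ, ‖g u‖ ≤ Cb / k := by
      intro u
      rw [hgdef, norm_mul, norm_mul, habsσ, Complex.norm_I, Complex.norm_real]
      simp only [one_mul, Real.norm_eq_abs, abs_div, abs_of_pos (hh_pos u)]
      exact div_le_div₀ hCb0 (hb_bdd u) hk (hh_ge u)
    have hLg : ∀ u v : ℝ, ‖g u - g v‖ ≤ ((Lb:ℝ)/k + Cb*(Lm:ℝ)/k^2) * |u - v| := by
      intro u v
      have hgu : g u - g v = (σ:ℂ) * Complex.I * (((b u / h u - b v / h v : ℝ)) : ℂ) := by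
        rw [hgdef]; push_cast; ring
      rw [hgu, norm_mul, norm_mul, habsσ, Complex.norm_I, Complex.norm_real, one_mul, one_mul,
        Real.norm_eq_abs]
      have hb' : |b u - b v| ≤ (Lb:ℝ) * |u - v| := by
        have := hb_lip.dist_le_mul u v
        rwa [Real.dist_eq, Real.dist_eq] at this
      have hm' : |m v - m u| ≤ (Lm:ℝ) * |u - v| := by
        have := hm_lip.dist_le_mul v u
        rw [Real.dist_eq, Real.dist_eq, abs_sub_comm v u] at this
        exact this
      have hh' : |h v - h u| ≤ (Lm:ℝ) * |u - v| :=
        le_trans (sqrt_add_sq_lip' (hm_nonneg v) (hm_nonneg u) (sq_nonneg k)) hm'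
      have hsplit : b u / h u - b v / h v
          = (b u - b v)/h u + b v * (h v - h u)/(h u * h v) := by
        field_simp [(hh_pos u).ne', (hh_pos v).ne']
        ring
      rw [hsplit]
      have h1 : |(b u - b v)/h u| ≤ ((Lb:ℝ) * |u-v|)/k := by
        rw [abs_div, abs_of_pos (hh_pos u)]
        exact div_le_div₀ (by positivity) hb' hk (hh_ge u)
      have h2 : |b v * (h v - h u)/(h u * h v)| ≤ (Cb * ((Lm:ℝ)*|u-v|))/(k*k) := by
        rw [abs_div, abs_mul, abs_of_pos (mul_pos (hh_pos u) (hh_pos v))]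
        apply div_le_div₀ (by positivity) ?_ (by positivity) ?_
        · exact mul_le_mul (hb_bdd v) hh' (abs_nonneg _) hCb0
        · exact mul_le_mul (hh_ge u) (hh_ge v) hk.le (hh_pos u).le
      calc |(b u - b v)/h u + b v * (h v - h u)/(h u * h v)|
          ≤ |(b u - b v)/h u| + |b v * (h v - h u)/(h u * h v)| := abs_add_le _ _
        _ ≤ ((Lb:ℝ) * |u-v|)/k + (Cb * ((Lm:ℝ)*|u-v|))/(k*k) := add_le_add h1 h2
        _ = ((Lb:ℝ)/k + Cb*(Lm:ℝ)/k^2) * |u-v| := by ring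
    have hosc : oscInt b m σ t ξ = ∫ u in (0:ℝ)..t, F u * (b u : ℂ) := rfl
    -- trivial bound
    have htriv : ‖oscInt b m σ t ξ‖ ≤ Cb * t := by
      rw [hosc]
      have hbd := intervalIntegral.norm_integral_le_of_norm_le_const (C := Cb)
        (a := (0:ℝ)) (b := t) (f := fun u => F u * (b u : ℂ))
        (fun x _ => by
          rw [norm_mul, hFb, one_mul, Complex.norm_real, Real.norm_eq_abs]
          exact hb_bdd x)
      calc ‖∫ u in (0:ℝ)..t, F u * (b u : ℂ)‖ ≤ Cb * |t - 0| := hbd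
        _ = Cb * t := by rw [sub_zero, _root_.abs_of_nonneg ht]
    rcases le_or_gt k 1 with hk1 | hk1
    · refine le_trans htriv ?_
      rw [le_div_iff₀ hk]
      have h1 : Cb * t * k ≤ Cb * t := by nlinarith [mul_nonneg hCb0 ht]
      nlinarith [mul_nonneg hCb0 ht, mul_nonneg hCpos.le ht]
    · -- main estimate via integration by parts
      have hibp := ibp_bound' F F' g ht hF hF'c hgc
        (Mf := k + Cm) (Mg := Cb/k) (L := (Lb:ℝ)/k + Cb*(Lm:ℝ)/k^2)
        (by positivity) (by positivity) (by positivity)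
        (fun u _ => hF'b u) (fun u _ => (hFb u).le) (fun u _ => hgb u)
        (fun u _ v _ => hLg u v)
      have hrw : oscInt b m σ t ξ = ∫ u in (0:ℝ)..t, F' u * g u := by
        rw [hosc]
        exact (intervalIntegral.integral_congr (fun x _ => hid x)).symm
      rw [hrw]
      refine le_trans hibp ?_
      rw [sub_zero, le_div_iff₀ hk]
      have e : (2*(Cb/k) + 2*((Lb:ℝ)/k + Cb*(Lm:ℝ)/k^2)*t)*k
          = 2*Cb + 2*((Lb:ℝ) + Cb*(Lm:ℝ)/k)*t := by
        field_simp
      rw [e]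
      have hq : Cb*(Lm:ℝ)/k ≤ Cb*(Lm:ℝ) := by
        rw [div_le_iff₀ hk]
        nlinarith [mul_le_mul_of_nonneg_left hk1.le (mul_nonneg hCb0 hLm0)]
      nlinarith [mul_le_mul_of_nonneg_right hq ht, mul_nonneg hLb0 ht]
  refine ⟨C, hCpos, ?_, ?_⟩
  · intro t ht ξ hξ
    exact ⟨key (-1) (Or.inr rfl) t ht ξ hξ, key 1 (Or.inl rfl) t ht ξ hξ⟩
  · intro ε hε t₁ ht₁
    refine ⟨max 1 (C*(1+t₁)/ε), lt_of_lt_of_le one_pos (le_max_left _ _), ?_⟩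
    intro ξ hR t htm
    have hξn : 0 < ‖ξ‖ := lt_of_lt_of_le one_pos (le_trans (le_max_left _ _) hR)
    have hξ : ξ ≠ 0 := norm_pos_iff.1 hξn
    have hb1 : C*(1+t) ≤ ε * ‖ξ‖ := by
      have h1 : C*(1+t₁)/ε ≤ ‖ξ‖ := le_trans (le_max_right _ _) hR
      have h2 : C*(1+t₁) ≤ ε*‖ξ‖ := by
        rw [div_le_iff₀ hε] at h1
        linarith
      have h3 : C*(1+t) ≤ C*(1+t₁) := by nlinarith [htm.2, hCpos]
      linarith
    have hres : ∀ σ : ℝ, σ = 1 ∨ σ = -1 → ‖oscInt b m σ t ξ‖ ≤ ε := by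
      intro σ hσ
      refine le_trans (key σ hσ t htm.1 ξ hξ) ?_
      rw [div_le_iff₀ hξn]
      linarith
    exact ⟨hres (-1) (Or.inr rfl), hres 1 (Or.inl rfl)⟩
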